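/- For every m ≥ 0 and n ≥ 0, x₀(m, n + φ(3^m)) = 2^(φ(3^m)) · x₀(m,n) − (2^(φ(3^m)) − 1)/3^m, where x₀(m,n) := (1 + 2^n · y₀(m,n))/3^m and y₀(m,n) := ((3^m+1)/2)^(n+3^(m−1)) mod 3^m. -/

import Mathlib

lemma two_pow_key (m : ℕ) (hm : 1 ≤ m) :
    ((3:ℤ)^m) ∣ 2^(3^(m-1)) + 1 := by
  induction m with
  | zero => omega
  | succ k ih =>
    rcases Nat.eq_zero_or_pos k with hk | hk
    · subst hk; norm_num
    · have h := ih hk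
      have h3 : (3:ℤ) ∣ 2^(3^(k-1)) + 1 :=
        dvd_trans (dvd_pow_self 3 (by omega)) h
      obtain ⟨t, ht⟩ := h3
      set a : ℤ := 2^(3^(k-1)) with ha
      have hkk : k + 1 - 1 = k := by omega
      have e1 : (2:ℤ)^(3^(k+1-1)) = a^3 := by
        rw [hkk, ha, ← pow_mul, ← pow_succ]
        congr 2
        omega
      have haa : a = 3*t - 1 := by linarith
      have h3' : (3:ℤ) ∣ a^2 - a + 1 := ⟨3*t^2 - 3*t + 1, by rw [haa]; ring⟩
      have e2 : a^3 + 1 = (a+1)*(a^2 - a + 1) := by ring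
      rw [e1, e2, pow_succ]
      exact mul_dvd_mul h h3'

theorem stmt_12 (m n : ℕ) :
    let y₀ : ℕ → ℕ := fun k => ((3 ^ m + 1) / 2) ^ (k + 3 ^ (m - 1)) % 3 ^ m
    let x₀ : ℕ → ℕ := fun k => (1 + 2 ^ k * y₀ k) / 3 ^ m
    x₀ (n + Nat.totient (3 ^ m)) =
      2 ^ Nat.totient (3 ^ m) * x₀ n - (2 ^ Nat.totient (3 ^ m) - 1) / 3 ^ m := by
  intro y₀ x₀
  rcases Nat.eq_zero_or_pos m with hm | hm
  · subst hm
    simp [y₀, x₀, Nat.totient_one]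
  · set T : ℕ := 3 ^ m with hT
    set e : ℕ := 3 ^ (m - 1) with he
    set c : ℕ := (3 ^ m + 1) / 2 with hc
    have hTpos : 0 < T := Nat.pow_pos (by norm_num)
    have hT1 : 1 < T := by
      calc 1 < 3 ^ 1 := by norm_num
      _ ≤ 3 ^ m := Nat.pow_le_pow_right (by norm_num) hm
    haveI : NeZero T := ⟨by omega⟩
    have hφ : Nat.totient (3 ^ m) = 2 * e := by
      rw [Nat.totient_prime_pow Nat.prime_three hm]
      simp [he]; ring
    -- 2 * c = T + 1
    have hodd : Odd (3 ^ m) := Odd.pow ⟨1, by norm_num⟩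
    have h2c : 2 * c = T + 1 := by
      rw [hc, hT, Nat.mul_div_cancel']
      obtain ⟨j, hj⟩ := hodd
      exact ⟨j + 1, by omega⟩
    -- in ZMod T
    have hc1 : (2 : ZMod T) * (c : ℕ) = 1 := by
      have : ((2 * c : ℕ) : ZMod T) = ((T + 1 : ℕ) : ZMod T) := by rw [h2c]
      push_cast at this
      rw [ZMod.natCast_self] at this
      simpa using this
    have h2e : (2 : ZMod T)^e = -1 := by
      have h := two_pow_key m hm
      have : (((2:ℤ)^(3^(m-1)) + 1 : ℤ) : ZMod T) = 0 := by
        rw [ZMod.intCast_zmod_eq_zero_iff_dvd]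
        exact_mod_cast h
      push_cast at this
      rw [← he] at this
      linear_combination this
    have hce : ((c : ZMod T))^e = -1 := by
      have h := hc1
      have : ((2:ZMod T) * c)^e = 1 := by rw [hc1, one_pow]
      rw [mul_pow, h2e, neg_one_mul] at this
      linear_combination -this
    have hc2e : ((c : ZMod T))^(2*e) = 1 := by
      rw [two_mul, pow_add, hce]; ring
    -- divisibility of 1 + 2^k * y₀ k
    have hy₀ : ∀ k, ((y₀ k : ℕ) : ZMod T) = (c : ZMod T)^(k + e) := by
      intro k
      show (((c ^ (k + e)) % T : ℕ) : ZMod T) = _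
      rw [ZMod.natCast_mod]
      push_cast
      ring
    have hA : ∀ k, T ∣ 1 + 2^k * y₀ k := by
      intro k
      have : ((1 + 2^k * y₀ k : ℕ) : ZMod T) = 0 := by
        push_cast
        rw [hy₀ k, pow_add, ← mul_assoc, ← mul_pow, hc1, one_pow, one_mul, hce]
        ring
      exact (ZMod.natCast_eq_zero_iff _ _).mp this
    -- y₀ (n + 2e) = y₀ n
    have hy : y₀ (n + 2*e) = y₀ n := by
      show (c ^ (n + 2*e + e)) % T = (c ^ (n + e)) % T
      have : ((c ^ (n + 2*e + e) : ℕ) : ZMod T) = ((c ^ (n + e) : ℕ) : ZMod T) := by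
        push_cast
        have : (c:ZMod T) ^ (n + 2*e + e) = (c:ZMod T)^(n+e) * (c:ZMod T)^(2*e) := by
          rw [← pow_add]; ring_nf
        rw [this, hc2e, mul_one]
      exact (ZMod.natCast_eq_natCast_iff _ _ _).mp this
    -- divisibility of 2^(2e) - 1
    have hB : T ∣ 2^(2*e) - 1 := by
      have h1 : ((2^(2*e) : ℕ) : ZMod T) = ((1 : ℕ) : ZMod T) := by
        push_cast
        rw [two_mul, pow_add, h2e]; ring
      have h2 : (2:ℕ)^(2*e) ≡ 1 [MOD T] := (ZMod.natCast_eq_natCast_iff _ _ _).mp h1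
      exact (Nat.modEq_iff_dvd' (Nat.one_le_two_pow)).mp h2.symm
    -- arithmetic
    set X : ℕ := x₀ n with hX
    set Q : ℕ := (2^(2*e) - 1) / T with hQ
    have hx : T * X = 1 + 2^n * y₀ n := by
      rw [hX]; exact Nat.mul_div_cancel' (hA n)
    have hq : T * Q = 2^(2*e) - 1 := Nat.mul_div_cancel' hB
    have hX1 : 1 ≤ X := by
      rcases Nat.eq_zero_or_pos X with h | h
      · rw [h, mul_zero] at hx; omega
      · exact h
    have hQle : Q ≤ 2^(2*e) * X := by
      have h1 : T * Q ≤ T * (2^(2*e) * X) := by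
        rw [hq]
        calc 2^(2*e) - 1 ≤ 2^(2*e) * X := by
              have := Nat.one_le_two_pow (n := 2*e)
              calc 2^(2*e) - 1 ≤ 2^(2*e) := by omega
              _ = 2^(2*e) * 1 := by ring
              _ ≤ 2^(2*e) * X := Nat.mul_le_mul_left _ hX1
          _ ≤ T * (2^(2*e) * X) := Nat.le_mul_of_pos_left _ hTpos
      exact Nat.le_of_mul_le_mul_left h1 hTpos
    have hp1 : (1:ℕ) ≤ 2^(2*e) := Nat.one_le_two_pow
    have key : 1 + 2^(n + 2*e) * y₀ (n + 2*e) = T * (2^(2*e) * X - Q) := by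
      rw [hy]
      zify [hQle, hp1] at *
      have hpow : (2:ℤ)^(n + 2*e) = 2^n * 2^(2*e) := by rw [pow_add]
      rw [hpow]
      linear_combination hq - 2^(2*e) * hx
    rw [hφ]
    show (1 + 2^(n + 2*e) * y₀ (n + 2*e)) / T = 2^(2*e) * X - Q
    rw [key, Nat.mul_div_cancel_left _ hTpos]
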